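/- Let a < b be real numbers, let α ∈ ℝ, and let u : [a, b] → ℂ be continuously differentiable. Then (1 + α²)^{1/2} |u(b)|² ≤ (1 + (b − a)⁻¹)(1 + α²) ∫ₐᵇ |u(y)|² dy + ∫ₐᵇ |u′(y)|² dy. -/

import Mathlib

open MeasureTheory intervalIntegral Set

private lemma re_mul_add_im_mul_le (z w : ℂ) :
    z.re * w.re + z.im * w.im ≤ ‖z‖ * ‖w‖ := by
  have h1 : ‖z‖ ^ 2 = z.re ^ 2 + z.im ^ 2 := by
    rw [Complex.sq_norm, Complex.normSq_apply]; ring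
  have h2 : ‖w‖ ^ 2 = w.re ^ 2 + w.im ^ 2 := by
    rw [Complex.sq_norm, Complex.normSq_apply]; ring
  nlinarith [sq_nonneg (z.re * w.im - z.im * w.re), norm_nonneg z, norm_nonneg w,
    sq_nonneg (‖z‖ * ‖w‖ - (z.re * w.re + z.im * w.im)), mul_nonneg (norm_nonneg z) (norm_nonneg w)]

/-- The key one-dimensional (per Fourier mode) inequality in the proof of the
trace estimate (Lemma 3.3): for a continuously differentiable `u : [a, b] → ℂ`,
`(1 + α²)^{1/2} |u(b)|² ≤ (1 + (b − a)⁻¹)(1 + α²) ∫ₐᵇ |u|² + ∫ₐᵇ |u′|²`. -/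
theorem trace_mode_inequality
    (a b α : ℝ) (hab : a < b) (u u' : ℝ → ℂ)
    (hderiv : ∀ y ∈ Set.Icc a b, HasDerivWithinAt u (u' y) (Set.Icc a b) y)
    (hcont : ContinuousOn u' (Set.Icc a b)) :
    Real.sqrt (1 + α ^ 2) * ‖u b‖ ^ 2
      ≤ (1 + (b - a)⁻¹) * (1 + α ^ 2) * (∫ y in a..b, ‖u y‖ ^ 2)
        + ∫ y in a..b, ‖u' y‖ ^ 2 := by
  set s := Real.sqrt (1 + α ^ 2) with hs_def
  have hαpos : (0:ℝ) < 1 + α ^ 2 := by positivity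
  have hs2 : s ^ 2 = 1 + α ^ 2 := Real.sq_sqrt hαpos.le
  have hsnn : 0 ≤ s := Real.sqrt_nonneg _
  have hs1 : 1 ≤ s := by nlinarith
  have hspos : 0 < s := lt_of_lt_of_le one_pos hs1
  -- continuity of u on Icc
  have hu_cont : ContinuousOn u (Icc a b) := fun y hy => (hderiv y hy).continuousWithinAt
  -- g = ‖u‖², its derivative g'
  set g : ℝ → ℝ := fun t => ‖u t‖ ^ 2 with hg_def
  set g' : ℝ → ℝ := fun t => 2 * ((u t).re * (u' t).re + (u t).im * (u' t).im) with hg'_def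
  have hg_deriv : ∀ t ∈ Icc a b, HasDerivWithinAt g (g' t) (Icc a b) t := by
    intro t ht
    have h := hderiv t ht
    have hre : HasDerivWithinAt (fun t => (u t).re) ((u' t).re) (Icc a b) t :=
      (Complex.reCLM.hasFDerivAt.comp_hasDerivWithinAt t h)
    have him : HasDerivWithinAt (fun t => (u t).im) ((u' t).im) (Icc a b) t :=
      (Complex.imCLM.hasFDerivAt.comp_hasDerivWithinAt t h)
    have : HasDerivWithinAt (fun t => (u t).re * (u t).re + (u t).im * (u t).im)
        ((u' t).re * (u t).re + (u t).re * (u' t).re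
          + ((u' t).im * (u t).im + (u t).im * (u' t).im)) (Icc a b) t :=
      (hre.mul hre).add (him.mul him)
    have heq : ∀ x, (u x).re * (u x).re + (u x).im * (u x).im = g x := by
      intro x
      have : g x = Complex.normSq (u x) := by
        rw [hg_def]; simp only
        rw [Complex.sq_norm]
      rw [this, Complex.normSq_apply]
    have h2 : HasDerivWithinAt g
        ((u' t).re * (u t).re + (u t).re * (u' t).re
          + ((u' t).im * (u t).im + (u t).im * (u' t).im)) (Icc a b) t := by
      refine this.congr (fun x _ => (heq x).symm) (heq t).symm
    convert h2 using 1
    rw [hg'_def]; ring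
  have hg_cont : ContinuousOn g (Icc a b) := by
    exact (hu_cont.norm).pow 2
  have hg'_cont : ContinuousOn g' (Icc a b) := by
    apply ContinuousOn.mul continuousOn_const
    exact ((Complex.continuous_re.comp_continuousOn hu_cont).mul
        (Complex.continuous_re.comp_continuousOn hcont)).add
      ((Complex.continuous_im.comp_continuousOn hu_cont).mul
        (Complex.continuous_im.comp_continuousOn hcont))
  -- K = ∫ 2‖u‖‖u'‖
  set K : ℝ := ∫ y in a..b, 2 * ‖u y‖ * ‖u' y‖ with hK_def
  have hcont2 : ContinuousOn (fun y => 2 * ‖u y‖ * ‖u' y‖) (Icc a b) :=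
    (continuousOn_const.mul hu_cont.norm).mul hcont.norm
  have hint2 : IntervalIntegrable (fun y => 2 * ‖u y‖ * ‖u' y‖) volume a b :=
    (hcont2.mono (by rw [uIcc_of_le hab.le])).intervalIntegrable
  -- pointwise bound |g'| ≤ 2‖u‖‖u'‖
  have hg'_bound : ∀ t, g' t ≤ 2 * ‖u t‖ * ‖u' t‖ := by
    intro t
    have h := re_mul_add_im_mul_le (u t) (u' t)
    show 2 * ((u t).re * (u' t).re + (u t).im * (u' t).im) ≤ 2 * ‖u t‖ * ‖u' t‖
    nlinarith
  -- key: g b ≤ g y + K for all y ∈ Icc a b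
  have hkey : ∀ y ∈ Icc a b, g b ≤ g y + K := by
    intro y hy
    have hyb : y ≤ b := hy.2
    have hsub : Icc y b ⊆ Icc a b := Icc_subset_Icc hy.1 le_rfl
    have hg'int : IntervalIntegrable g' volume y b :=
      ((hg'_cont.mono hsub).mono (by rw [uIcc_of_le hyb])).intervalIntegrable
    have hftc : (∫ t in y..b, g' t) = g b - g y := by
      apply integral_eq_sub_of_hasDeriv_right_of_le hyb (hg_cont.mono hsub)
        (fun x hx => ?_) hg'int
      have hmem : Icc a b ∈ nhds x :=
        Icc_mem_nhds (lt_of_le_of_lt hy.1 hx.1) hx.2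
      exact ((hg_deriv x ⟨(hy.1.trans hx.1.le), hx.2.le⟩).hasDerivAt hmem).hasDerivWithinAt
    have h1 : (∫ t in y..b, g' t) ≤ ∫ t in y..b, 2 * ‖u t‖ * ‖u' t‖ := by
      apply integral_mono_on hyb hg'int (hint2.mono_set (by
        rw [uIcc_of_le hyb, uIcc_of_le hab.le]; exact hsub))
      intro t _; exact hg'_bound t
    have h2 : (∫ t in y..b, 2 * ‖u t‖ * ‖u' t‖) ≤ K := by
      rw [hK_def]
      apply integral_mono_interval hy.1 hyb le_rfl ?_ hint2
      filter_upwards with t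
      simp only [Pi.zero_apply]
      positivity
    linarith [hftc ▸ (h1.trans h2)]
  -- integrate over y : (b-a)(g b - K) ≤ ∫ g
  have hgint : IntervalIntegrable g volume a b :=
    (hg_cont.mono (by rw [uIcc_of_le hab.le])).intervalIntegrable
  have havg : (b - a) * (g b - K) ≤ ∫ y in a..b, g y := by
    have h := integral_mono_on hab.le (_root_.intervalIntegrable_const (c := g b - K)) hgint
      (fun y hy => by linarith [hkey y hy])
    rwa [intervalIntegral.integral_const, smul_eq_mul] at h
  -- K ≤ s ∫‖u‖² + s⁻¹ ∫‖u'‖²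
  have huint : IntervalIntegrable (fun y => ‖u y‖ ^ 2) volume a b := hgint
  have hu'int : IntervalIntegrable (fun y => ‖u' y‖ ^ 2) volume a b :=
    ((hcont.norm.pow 2).mono (by rw [uIcc_of_le hab.le])).intervalIntegrable
  have hKbound : K ≤ s * (∫ y in a..b, ‖u y‖ ^ 2) + s⁻¹ * ∫ y in a..b, ‖u' y‖ ^ 2 := by
    have hpt : ∀ y ∈ Icc a b, 2 * ‖u y‖ * ‖u' y‖ ≤ s * ‖u y‖ ^ 2 + s⁻¹ * ‖u' y‖ ^ 2 := by
      intro y _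
      have h := sq_nonneg (s * ‖u y‖ - ‖u' y‖)
      have hsinv : s * s⁻¹ = 1 := mul_inv_cancel₀ hspos.ne'
      have : s * (2 * ‖u y‖ * ‖u' y‖) ≤ s * (s * ‖u y‖ ^ 2 + s⁻¹ * ‖u' y‖ ^ 2) := by
        nlinarith
      exact le_of_mul_le_mul_left this hspos
    have h := integral_mono_on hab.le hint2
      (((huint.const_mul s)).add ((hu'int.const_mul s⁻¹))) hpt
    rw [hK_def]
    calc K ≤ ∫ y in a..b, (s * ‖u y‖ ^ 2 + s⁻¹ * ‖u' y‖ ^ 2) := h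
      _ = s * (∫ y in a..b, ‖u y‖ ^ 2) + s⁻¹ * ∫ y in a..b, ‖u' y‖ ^ 2 := by
          rw [integral_add (huint.const_mul s) (hu'int.const_mul s⁻¹),
            intervalIntegral.integral_const_mul, intervalIntegral.integral_const_mul]
  -- positivity facts and conclusion
  have hba : (0:ℝ) < b - a := by linarith
  have hIu : 0 ≤ ∫ y in a..b, ‖u y‖ ^ 2 :=
    integral_nonneg hab.le (fun y _ => by positivity)
  have hgb : g b ≤ (b - a)⁻¹ * (∫ y in a..b, ‖u y‖ ^ 2) + K := by
    have h := havg
    rw [hg_def] at h ⊢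
    have := mul_le_mul_of_nonneg_left h (le_of_lt (inv_pos.mpr hba))
    rw [← mul_assoc, inv_mul_cancel₀ hba.ne', one_mul] at this
    linarith [this]
  -- multiply by s and finish
  have hsinv : s * s⁻¹ = 1 := mul_inv_cancel₀ hspos.ne'
  have hfinal : s * g b ≤ s * ((b - a)⁻¹ * (∫ y in a..b, ‖u y‖ ^ 2) + K) :=
    mul_le_mul_of_nonneg_left hgb hspos.le
  have hKs : s * K ≤ (1 + α ^ 2) * (∫ y in a..b, ‖u y‖ ^ 2) + ∫ y in a..b, ‖u' y‖ ^ 2 := by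
    have := mul_le_mul_of_nonneg_left hKbound hspos.le
    calc s * K ≤ s * (s * (∫ y in a..b, ‖u y‖ ^ 2) + s⁻¹ * ∫ y in a..b, ‖u' y‖ ^ 2) := this
      _ = s ^ 2 * (∫ y in a..b, ‖u y‖ ^ 2) + (s * s⁻¹) * ∫ y in a..b, ‖u' y‖ ^ 2 := by ring
      _ = (1 + α ^ 2) * (∫ y in a..b, ‖u y‖ ^ 2) + ∫ y in a..b, ‖u' y‖ ^ 2 := by
          rw [hs2, hsinv, one_mul]
  have hcoef : s * (b - a)⁻¹ ≤ (1 + α ^ 2) * (b - a)⁻¹ := by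
    apply mul_le_mul_of_nonneg_right _ (inv_pos.mpr hba).le
    nlinarith
  calc s * ‖u b‖ ^ 2 = s * g b := rfl
    _ ≤ s * (b - a)⁻¹ * (∫ y in a..b, ‖u y‖ ^ 2) + s * K := by
        rw [mul_add, ← mul_assoc] at hfinal; exact hfinal
    _ ≤ (1 + α ^ 2) * (b - a)⁻¹ * (∫ y in a..b, ‖u y‖ ^ 2)
        + ((1 + α ^ 2) * (∫ y in a..b, ‖u y‖ ^ 2) + ∫ y in a..b, ‖u' y‖ ^ 2) := by
        have := mul_le_mul_of_nonneg_right hcoef hIu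
        linarith
    _ = (1 + (b - a)⁻¹) * (1 + α ^ 2) * (∫ y in a..b, ‖u y‖ ^ 2)
        + ∫ y in a..b, ‖u' y‖ ^ 2 := by ring
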